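/- Let r be a positive integer, a_1,…,a_r and b_1,…,b_r positive integers, q ∈ ℂ with 0 < |q| < 1, f an odd positive integer, and χ a Dirichlet character modulo f. Then the function s ↦ L_r(s, χ | a_1,…,a_r; b_1,…,b_r) = 2^r Σ_{n_1,…,n_r=1}^∞ (-1)^{n_1+⋯+n_r} q^{b_1 n_1+⋯+b_r n_r} χ(n_1)⋯χ(n_r) (a_1 n_1+⋯+a_r n_r)^{-s} is complex-differentiable at every point of ℂ (an entire function of s). -/

import Mathlib

set_option maxHeartbeats 1000000

private lemma aux_sum_le_prod {ι : Type*} (s : Finset ι) (x : ι → ℝ) (hx : ∀ j, 0 ≤ x j) :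
    ∑ j ∈ s, x j ≤ ∏ j ∈ s, (1 + x j) := by
  induction s using Finset.cons_induction with
  | empty => simp
  | cons j s hj ih =>
    rw [Finset.sum_cons, Finset.prod_cons]
    have h1 : (1:ℝ) ≤ ∏ i ∈ s, (1 + x i) :=
      calc (1:ℝ) = ∏ i ∈ s, 1 := by simp
        _ ≤ ∏ i ∈ s, (1 + x i) :=
          Finset.prod_le_prod (fun i _ => zero_le_one) (fun i _ => by linarith [hx i])
    nlinarith [hx j, ih]

private lemma aux_summable_pi_prod : ∀ {r : ℕ} (g : Fin r → ℕ+ → ℝ),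
    (∀ j n, 0 ≤ g j n) → (∀ j, Summable (g j)) →
    Summable (fun n : Fin r → ℕ+ => ∏ j, g j (n j)) := by
  intro r
  induction r with
  | zero =>
    intro g _ _
    simp only [Finset.univ_eq_empty, Finset.prod_empty]
    exact summable_of_finite_support (Set.toFinite _)
  | succ r ih =>
    intro g hg0 hgs
    have hB : Summable (fun n : Fin r → ℕ+ => ∏ j : Fin r, g j.succ (n j)) :=
      ih (fun j => g j.succ) (fun j n => hg0 _ _) (fun j => hgs _)
    have h2 : Summable (fun p : ℕ+ × (Fin r → ℕ+) =>
        g 0 p.1 * ∏ j : Fin r, g j.succ (p.2 j)) :=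
      Summable.mul_of_nonneg (f := g 0)
        (g := fun n : Fin r → ℕ+ => ∏ j : Fin r, g j.succ (n j))
        (hgs 0) hB (fun n => hg0 0 n)
        (fun p => Finset.prod_nonneg fun j _ => hg0 _ _)
    let e : ℕ+ × (Fin r → ℕ+) ≃ (Fin (r+1) → ℕ+) :=
      ⟨fun p => Fin.cons p.1 p.2, fun n => (n 0, Fin.tail n),
        fun p => by simp, fun n => by simp⟩
    have key : ∀ p : ℕ+ × (Fin r → ℕ+),
        g 0 p.1 * ∏ j : Fin r, g j.succ (p.2 j)
          = ((fun n : Fin (r+1) → ℕ+ => ∏ j, g j (n j)) ∘ e) p := by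
      intro p
      have he : ((fun n : Fin (r+1) → ℕ+ => ∏ j, g j (n j)) ∘ e) p
          = ∏ j : Fin (r+1), g j (Fin.cons (α := fun _ => ℕ+) p.1 p.2 j) := rfl
      rw [he, Fin.prod_univ_succ, Fin.cons_zero]
      exact congrArg _ (Finset.prod_congr rfl fun j _ => by rw [Fin.cons_succ])
    exact e.summable_iff.mp (h2.congr key)

/-- For `0 < |q| < 1`, `f` odd and `χ` a Dirichlet character mod `f`, the
multivariate Dirichlet `q`-`L`-function
`s ↦ 2^r Σ_{n⃗ ≥ 1} (-1)^{Σ n_j} q^{Σ b_j n_j} ∏_j χ(n_j) (Σ a_j n_j)^{-s}`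
is complex-differentiable at every point of `ℂ` (an entire function of `s`). -/
theorem changhee_qL_entire
    (r : ℕ) (hr : 0 < r) (a b : Fin r → ℕ)
    (ha : ∀ j, 0 < a j) (hb : ∀ j, 0 < b j)
    (q : ℂ) (hq0 : 0 < ‖q‖) (hq1 : ‖q‖ < 1)
    (f : ℕ) (hf : 0 < f) (hfodd : Odd f)
    (χ : DirichletCharacter ℂ f) (s : ℂ) :
    DifferentiableAt ℂ
      (fun s : ℂ =>
        (2 : ℂ) ^ r * ∑' n : Fin r → ℕ+,
          (-1 : ℂ) ^ (∑ j, (n j : ℕ)) * q ^ (∑ j, b j * (n j : ℕ)) *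
            (∏ j, χ ((n j : ℕ) : ZMod f)) *
            ((∑ j, a j * (n j : ℕ) : ℕ) : ℂ) ^ (-s)) s := by
  set Q : ℝ := ‖q‖ with hQ
  have hQ0 : 0 ≤ Q := norm_nonneg q
  set R : ℕ := ⌈‖s‖⌉₊ + 1 with hR
  set U : Set ℂ := Metric.ball s 1 with hU
  -- the summable bound
  set g : Fin r → ℕ+ → ℝ := fun j m => Q ^ (m : ℕ) * ((1 + a j : ℝ) * m) ^ R with hg
  have hg0 : ∀ j m, 0 ≤ g j m := by
    intro j m
    apply mul_nonneg (pow_nonneg hQ0 _)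
    positivity
  have hgs : ∀ j, Summable (g j) := by
    intro j
    have h0 : Summable (fun m : ℕ => (m : ℝ) ^ R * Q ^ m) := by
      apply summable_pow_mul_geometric_of_norm_lt_one
      rwa [Real.norm_eq_abs, abs_of_nonneg hQ0]
    have h1 : Summable (fun m : ℕ => (1 + a j : ℝ) ^ R * ((m : ℝ) ^ R * Q ^ m)) :=
      h0.mul_left _
    have h2 := h1.comp_injective (fun m₁ m₂ h => PNat.coe_injective h :
      Function.Injective (fun m : ℕ+ => (m : ℕ)))
    refine h2.congr fun m => ?_
    simp only [Function.comp, hg, mul_pow]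
    ring
  have hgsum : Summable (fun n : Fin r → ℕ+ => ∏ j, g j (n j)) :=
    aux_summable_pi_prod g hg0 hgs
  -- the terms
  set F : (Fin r → ℕ+) → ℂ → ℂ := fun n w =>
      (-1 : ℂ) ^ (∑ j, (n j : ℕ)) * q ^ (∑ j, b j * (n j : ℕ)) *
        (∏ j, χ ((n j : ℕ) : ZMod f)) *
        ((∑ j, a j * (n j : ℕ) : ℕ) : ℂ) ^ (-w) with hF
  have hN : ∀ n : Fin r → ℕ+, 1 ≤ ∑ j, a j * (n j : ℕ) := by
    intro n
    obtain ⟨j0⟩ : Nonempty (Fin r) := ⟨⟨0, hr⟩⟩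
    calc 1 ≤ a j0 * (n j0 : ℕ) := Nat.one_le_iff_ne_zero.mpr
            (Nat.mul_ne_zero (ha j0).ne' (n j0).pos.ne')
      _ ≤ ∑ j, a j * (n j : ℕ) :=
        Finset.single_le_sum (f := fun j => a j * (n j : ℕ))
          (fun j _ => Nat.zero_le _) (Finset.mem_univ j0)
  -- differentiability of each term on U
  have hFdiff : ∀ n, DifferentiableOn ℂ (F n) U := by
    intro n
    have hne : ((∑ j, a j * (n j : ℕ) : ℕ) : ℂ) ≠ 0 :=
      Nat.cast_ne_zero.mpr (Nat.one_le_iff_ne_zero.mp (hN n))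
    exact (((differentiable_id.neg).const_cpow (Or.inl hne)).const_mul _).differentiableOn
  -- the bound
  have hFle : ∀ n, ∀ w ∈ U, ‖F n w‖ ≤ ∏ j, g j (n j) := by
    intro n w hw
    set N : ℕ := ∑ j, a j * (n j : ℕ) with hNdef
    have hN1 : (1 : ℝ) ≤ (N : ℝ) := by exact_mod_cast hN n
    have hNpos : (0 : ℝ) < (N : ℝ) := lt_of_lt_of_le one_pos hN1
    -- norm of the cpow factor
    have hcpow : ‖((N : ℕ) : ℂ) ^ (-w)‖ = (N : ℝ) ^ ((-w).re) := by
      rw [show ((N : ℕ) : ℂ) = (((N : ℕ) : ℝ) : ℂ) by push_cast; ring]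
      rw [Complex.norm_cpow_eq_rpow_re_of_pos hNpos]
    -- exponent bound
    have hwre : (-w).re ≤ (R : ℝ) := by
      have h1 : (-w).re ≤ ‖-w‖ := Complex.re_le_norm _
      have h2 : ‖-w‖ = ‖w‖ := by simp
      have h3 : ‖w‖ ≤ ‖s‖ + 1 := by
        have hball := mem_ball_iff_norm.mp hw
        have e : w = s + (w - s) := by ring
        have h5 : ‖w‖ ≤ ‖s‖ + ‖w - s‖ := by
          nth_rewrite 1 [e]
          exact norm_add_le _ _
        linarith
      have h4 : ‖s‖ + 1 ≤ (R : ℝ) := by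
        have := Nat.le_ceil ‖s‖
        push_cast [hR]; linarith
      linarith
    have hcpowle : ‖((N : ℕ) : ℂ) ^ (-w)‖ ≤ (N : ℝ) ^ R := by
      rw [hcpow, ← Real.rpow_natCast (N : ℝ) R]
      exact Real.rpow_le_rpow_of_exponent_le hN1 hwre
    -- bound on N^R by the product
    have hNprod : (N : ℝ) ≤ ∏ j, ((1 + a j : ℝ) * (n j : ℕ)) := by
      have h1 : (N : ℝ) = ∑ j, (a j : ℝ) * (n j : ℕ) := by push_cast [hNdef]; ring_nf
      rw [h1]
      calc ∑ j, (a j : ℝ) * (n j : ℕ)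
          ≤ ∏ j, (1 + (a j : ℝ) * (n j : ℕ)) :=
            aux_sum_le_prod Finset.univ _ (fun j => by positivity)
        _ ≤ ∏ j, ((1 + a j : ℝ) * (n j : ℕ)) := by
            apply Finset.prod_le_prod (fun j _ => by positivity)
            intro j _
            have hnj : (1 : ℝ) ≤ ((n j : ℕ) : ℝ) := by exact_mod_cast (n j).one_le
            have haj : (0 : ℝ) ≤ (a j : ℝ) := Nat.cast_nonneg _
            nlinarith
    have hNR : ((N : ℝ)) ^ R ≤ ∏ j, ((1 + a j : ℝ) * (n j : ℕ)) ^ R := by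
      rw [Finset.prod_pow]
      exact pow_le_pow_left₀ (by positivity) hNprod R
    -- bound on the coefficient
    have hq_le : ‖q ^ (∑ j, b j * (n j : ℕ))‖ ≤ Q ^ (∑ j, (n j : ℕ)) := by
      rw [norm_pow]
      apply pow_le_pow_of_le_one hQ0 (le_of_lt hq1)
      apply Finset.sum_le_sum
      intro j _
      exact Nat.le_mul_of_pos_left _ (hb j)
    have hχ_le : ‖∏ j, χ ((n j : ℕ) : ZMod f)‖ ≤ 1 := by
      calc ‖∏ j, χ ((n j : ℕ) : ZMod f)‖ = ∏ j : Fin r, ‖χ ((n j : ℕ) : ZMod f)‖ :=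
            norm_prod _ _
        _ ≤ ∏ j : Fin r, 1 :=
            Finset.prod_le_prod (fun j _ => norm_nonneg _)
              (fun j _ => DirichletCharacter.norm_le_one χ _)
        _ = 1 := by simp
    have hc_le : ‖(-1 : ℂ) ^ (∑ j, (n j : ℕ)) * q ^ (∑ j, b j * (n j : ℕ)) *
        (∏ j, χ ((n j : ℕ) : ZMod f))‖ ≤ Q ^ (∑ j, (n j : ℕ)) := by
      rw [norm_mul, norm_mul, norm_pow, norm_neg, norm_one, one_pow, one_mul]
      calc ‖q ^ (∑ j, b j * (n j : ℕ))‖ * ‖∏ j, χ ((n j : ℕ) : ZMod f)‖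
          ≤ Q ^ (∑ j, (n j : ℕ)) * 1 :=
            mul_le_mul hq_le hχ_le (norm_nonneg _) (by positivity)
        _ = Q ^ (∑ j, (n j : ℕ)) := mul_one _
    calc ‖F n w‖ = ‖(-1 : ℂ) ^ (∑ j, (n j : ℕ)) * q ^ (∑ j, b j * (n j : ℕ)) *
            (∏ j, χ ((n j : ℕ) : ZMod f))‖ * ‖((N : ℕ) : ℂ) ^ (-w)‖ := by
          rw [hF]; rw [norm_mul]
      _ ≤ Q ^ (∑ j, (n j : ℕ)) * (N : ℝ) ^ R :=
          mul_le_mul hc_le hcpowle (norm_nonneg _) (by positivity)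
      _ ≤ Q ^ (∑ j, (n j : ℕ)) * ∏ j, ((1 + a j : ℝ) * (n j : ℕ)) ^ R := by
          apply mul_le_mul_of_nonneg_left hNR (by positivity)
      _ = ∏ j, g j (n j) := by
          rw [hg, ← Finset.prod_pow_eq_pow_sum, ← Finset.prod_mul_distrib]
  -- conclude
  have hdiff : DifferentiableOn ℂ (fun w : ℂ => ∑' n : Fin r → ℕ+, F n w) U :=
    Complex.differentiableOn_tsum_of_summable_norm hgsum hFdiff Metric.isOpen_ball hFle
  have hs : s ∈ U := Metric.mem_ball_self one_pos
  have hAt : DifferentiableAt ℂ (fun w : ℂ => ∑' n : Fin r → ℕ+, F n w) s :=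
    hdiff.differentiableAt (Metric.isOpen_ball.mem_nhds hs)
  exact hAt.const_mul _
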